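/- Let t be a substring of T and let s ∈ S_t. Then there exist nonnegative integers a and b such that for every occurrence (l, r) ∈ occ_T(t) one has l − a ≥ 1, r + b ≤ n, and T[l − a, r + b] = s. -/

import Mathlib

/-- `frag T i j` is the fragment `T[i, j]` of `T` (1-indexed, inclusive). -/
def frag {α : Type*} (T : List α) (i j : ℕ) : List α := (T.drop (i - 1)).take (j - i + 1)

/-- `t` is a substring of `T`, i.e. `t = T[i, j]` for some `1 ≤ i ≤ j ≤ |T|`. -/
def IsSub {α : Type*} (T t : List α) : Prop :=
  ∃ i j : ℕ, 1 ≤ i ∧ i ≤ j ∧ j ≤ T.length ∧ frag T i j = t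

/-- `occ T t` is the set of occurrences of `t` in `T`: pairs `(i, j)` with
`1 ≤ i ≤ j ≤ |T|` and `T[i, j] = t`. -/
def occ {α : Type*} (T t : List α) : Set (ℕ × ℕ) :=
  {p | 1 ≤ p.1 ∧ p.1 ≤ p.2 ∧ p.2 ≤ T.length ∧ frag T p.1 p.2 = t}

/-- `Sset T t` is the set `S_t`: substrings `s` of `T` such that `t` occurs in `s`
and `|occ_T(t)| = |occ_T(s)|`. -/
def Sset {α : Type*} (T t : List α) : Set (List α) :=
  {s | IsSub T s ∧ (∃ a b : ℕ, 1 ≤ a ∧ a ≤ b ∧ b ≤ s.length ∧ frag s a b = t) ∧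
    (occ T t).ncard = (occ T s).ncard}

theorem frag_length {α : Type*} (T : List α) (i j : ℕ) (h1 : 1 ≤ i) (hij : i ≤ j)
    (hj : j ≤ T.length) : (frag T i j).length = j - i + 1 := by
  simp [frag]; omega

theorem frag_frag {α : Type*} (T : List α) (i j a b : ℕ) (hi : 1 ≤ i) (ha : 1 ≤ a) (hab : a ≤ b)
    (hb : b ≤ j - i + 1) : frag (frag T i j) a b = frag T (i + a - 1) (i + b - 1) := by
  unfold frag
  rw [List.drop_take, List.take_take, List.drop_drop]
  congr 1
  · rw [Nat.min_eq_left (by omega)]; omega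
  · congr 1; omega

theorem occ_finite {α : Type*} (T x : List α) : (occ T x).Finite := by
  apply (Set.finite_Icc ((1 : ℕ), (1 : ℕ)) (T.length, T.length)).subset
  rintro ⟨i, j⟩ ⟨h1, h2, h3, _⟩
  exact ⟨⟨h1, le_trans h1 h2⟩, ⟨le_trans h2 h3, h3⟩⟩

/-- If `t` is a substring of `T` and `s ∈ S_t`, then there exist nonnegative integers
`a, b` such that for every occurrence `(l, r) ∈ occ_T(t)` we have `l - a ≥ 1`,
`r + b ≤ |T|`, and `T[l - a, r + b] = s`. -/
theorem extOcc {α : Type*} (T t s : List α) (ht : IsSub T t) (hs : s ∈ Sset T t) :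
    ∃ a b : ℕ, ∀ p ∈ occ T t,
      1 ≤ p.1 - a ∧ p.2 + b ≤ T.length ∧ frag T (p.1 - a) (p.2 + b) = s := by
  obtain ⟨hsub, ⟨a, b, ha, hab, hb, hfragt⟩, hcard⟩ := hs
  set f : ℕ × ℕ → ℕ × ℕ := fun p => (p.1 + a - 1, p.1 + b - 1) with hf
  -- every occurrence of s gives its length
  have hlen : ∀ p ∈ occ T s, p.2 = p.1 + s.length - 1 := by
    rintro ⟨i, j⟩ ⟨h1, h2, h3, h4⟩
    have := frag_length T i j h1 h2 h3
    rw [h4] at this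
    omega
  have hmaps : f '' occ T s ⊆ occ T t := by
    rintro q ⟨⟨i, j⟩, hp, rfl⟩
    have hj := hlen _ hp
    obtain ⟨h1, h2, h3, h4⟩ := hp
    simp only at hj h1 h2 h3 h4
    have hbij : b ≤ j - i + 1 := by omega
    show 1 ≤ i + a - 1 ∧ i + a - 1 ≤ i + b - 1 ∧ i + b - 1 ≤ T.length ∧
      frag T (i + a - 1) (i + b - 1) = t
    refine ⟨by omega, by omega, by omega, ?_⟩
    have := frag_frag T i j a b h1 ha hab hbij
    rw [h4, hfragt] at this
    exact this.symm
  have hinj : Set.InjOn f (occ T s) := by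
    rintro p hp q hq hpq
    have h1 := hlen p hp
    have h2 := hlen q hq
    have : p.1 + a - 1 = q.1 + a - 1 := congrArg Prod.fst hpq
    have hfst : p.1 = q.1 := by
      obtain ⟨hp1, _⟩ := hp
      obtain ⟨hq1, _⟩ := hq
      omega
    obtain ⟨hp1, _⟩ := hp
    obtain ⟨hq1, _⟩ := hq
    exact Prod.ext hfst (by omega)
  have himg : f '' occ T s = occ T t := by
    apply Set.eq_of_subset_of_ncard_le hmaps _ (occ_finite T t)
    rw [Set.ncard_image_of_injOn hinj, ← hcard]
  refine ⟨a - 1, s.length - b, ?_⟩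
  rintro p hp
  rw [← himg] at hp
  obtain ⟨⟨i, j⟩, hq, rfl⟩ := hp
  have hj := hlen _ hq
  obtain ⟨h1, h2, h3, h4⟩ := hq
  simp only at hj h1 h2 h3 h4
  show 1 ≤ i + a - 1 - (a - 1) ∧ i + b - 1 + (s.length - b) ≤ T.length ∧
    frag T (i + a - 1 - (a - 1)) (i + b - 1 + (s.length - b)) = s
  have e1 : i + a - 1 - (a - 1) = i := by omega
  have e2 : i + b - 1 + (s.length - b) = j := by omega
  rw [e1, e2]
  exact ⟨by omega, by omega, h4⟩
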